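/- Let g be a finite simple graph, k a natural number, S ⊆ V(g), and let π_1, …, π_c be a partition of V(g)\S into independent sets of g. For each i, enumerate π_i as v_{i,1}, …, v_{i,|π_i|} in non-decreasing order of |N̄_S(·)|. Then for every k-defective clique C of g with S ⊆ C ⊆ V(g), writing s_i = |C ∩ π_i|, the number of non-edges of C satisfies |Ē(C)| ≥ |Ē(S)| + ∑_{i=1}^{c} ( s_i(s_i − 1)/2 + ∑_{j=1}^{s_i} |N̄_S(v_{i,j})| ). -/

import Mathlib

open Finset

variable {V : Type*} [Fintype V] [DecidableEq V]

/-- The set of non-edges of `S`: unordered pairs of distinct vertices of `S`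
that are not adjacent in `G`. -/
def nonEdges (G : SimpleGraph V) [DecidableRel G.Adj] (S : Finset V) : Finset (Sym2 V) :=
  ((S ×ˢ S).filter fun p => p.1 ≠ p.2 ∧ ¬ G.Adj p.1 p.2).image fun p => s(p.1, p.2)

/-- The set of non-neighbors of `u` among `S \ {u}`. -/
def nonNbrs (G : SimpleGraph V) [DecidableRel G.Adj] (S : Finset V) (u : V) : Finset V :=
  (S.erase u).filter fun w => ¬ G.Adj u w

lemma mem_nonEdges {G : SimpleGraph V} [DecidableRel G.Adj] {S : Finset V} {x y : V} :
    s(x, y) ∈ nonEdges G S ↔ x ∈ S ∧ y ∈ S ∧ x ≠ y ∧ ¬ G.Adj x y := by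
  constructor
  · intro h
    simp only [nonEdges, mem_image, mem_filter, mem_product] at h
    obtain ⟨⟨a, b⟩, ⟨⟨ha, hb⟩, hne, hadj⟩, heq⟩ := h
    rw [Sym2.eq_iff] at heq
    rcases heq with ⟨rfl, rfl⟩ | ⟨rfl, rfl⟩
    · exact ⟨ha, hb, hne, hadj⟩
    · exact ⟨hb, ha, hne.symm, fun h => hadj h.symm⟩
  · rintro ⟨hx, hy, hne, hadj⟩
    simp only [nonEdges, mem_image, mem_filter, mem_product]
    exact ⟨(x, y), ⟨⟨hx, hy⟩, hne, hadj⟩, rfl⟩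

lemma nonEdges_card_of_indep (G : SimpleGraph V) [DecidableRel G.Adj] (T : Finset V)
    (h : ∀ x ∈ T, ∀ y ∈ T, ¬ G.Adj x y) :
    (nonEdges G T).card = T.card * (T.card - 1) / 2 := by
  have : ((T ×ˢ T).filter fun p => p.1 ≠ p.2 ∧ ¬ G.Adj p.1 p.2) = T.offDiag := by
    ext ⟨a, b⟩
    simp only [mem_filter, mem_product, Finset.mem_offDiag]
    constructor
    · rintro ⟨⟨ha, hb⟩, hne, _⟩; exact ⟨ha, hb, hne⟩
    · rintro ⟨ha, hb, hne⟩; exact ⟨⟨ha, hb⟩, hne, h a ha b hb⟩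
  rw [nonEdges, this]
  have := Sym2.card_image_offDiag T
  rw [Nat.choose_two_right] at this
  exact this

lemma between_card (G : SimpleGraph V) [DecidableRel G.Adj] (A S : Finset V)
    (hAS : Disjoint A S) :
    ((((A ×ˢ S).filter fun p => ¬ G.Adj p.1 p.2).image fun p => s(p.1, p.2)).card)
      = ∑ a ∈ A, (S.filter fun w => ¬ G.Adj a w).card := by
  rw [Finset.card_image_of_injOn]
  · rw [Finset.card_eq_sum_card_fiberwise (f := Prod.fst) (t := A)
      (fun p hp => (mem_product.1 (mem_filter.1 hp).1).1)]
    refine Finset.sum_congr rfl fun a ha => ?_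
    rw [← Finset.card_image_of_injOn (f := Prod.snd)]
    · congr 1
      ext w
      simp only [mem_image, mem_filter, mem_product]
      constructor
      · rintro ⟨⟨x, y⟩, ⟨⟨⟨hx, hy⟩, hadj⟩, rfl⟩, rfl⟩; exact ⟨hy, hadj⟩
      · rintro ⟨hw, hadj⟩; exact ⟨(a, w), ⟨⟨⟨ha, hw⟩, hadj⟩, rfl⟩, rfl⟩
    · rintro ⟨x, y⟩ hx ⟨x', y'⟩ hy (h : y = y')
      simp only [mem_coe, mem_filter] at hx hy
      have h1 : x = a := hx.2
      have h2 : x' = a := hy.2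
      simp_all
  · rintro ⟨a, b⟩ ha ⟨a', b'⟩ hb heq
    simp only [mem_coe, mem_filter, mem_product] at ha hb
    rw [Sym2.eq_iff] at heq
    rcases heq with ⟨rfl, rfl⟩ | ⟨rfl, rfl⟩
    · rfl
    · exact absurd ha.1.1 (Finset.disjoint_right.1 hAS hb.1.2)

lemma strictMono_le_apply {n s : ℕ} {g : Fin s → Fin n} (hg : StrictMono g) (j : Fin s) :
    (j : ℕ) ≤ (g j : ℕ) := by
  have key : ∀ m : ℕ, ∀ j : Fin s, (j : ℕ) = m → m ≤ (g j : ℕ) := by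
    intro m
    induction m with
    | zero => intro j _; omega
    | succ p ih =>
      intro j hj
      have hjs := j.isLt
      have hp : p < s := by omega
      have h1 := ih ⟨p, hp⟩ rfl
      have h2 : g ⟨p, hp⟩ < g j := hg (by simp [Fin.lt_def]; omega)
      simp only [Fin.lt_def] at h2
      omega
  exact key _ j rfl

lemma sum_smallest_le {n : ℕ} (f : Fin n → ℕ)
    (hf : ∀ j₁ j₂ : Fin n, j₁ ≤ j₂ → f j₁ ≤ f j₂) (T : Finset (Fin n)) :
    ∑ j ∈ Finset.univ.filter (fun j : Fin n => (j : ℕ) < T.card), f j ≤ ∑ j ∈ T, f j := by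
  have hs : T.card ≤ n := by simpa using T.card_le_univ
  have e := T.orderIsoOfFin rfl
  have hR : ∑ j ∈ T, f j = ∑ j : Fin T.card, f (e j : Fin n) := by
    rw [← Finset.sum_coe_sort T f]
    exact (Fintype.sum_equiv e.toEquiv _ _ fun j => rfl).symm
  have hL : ∑ j ∈ Finset.univ.filter (fun j : Fin n => (j : ℕ) < T.card), f j
      = ∑ j : Fin T.card, f (Fin.castLE hs j) := by
    have hset : Finset.univ.filter (fun j : Fin n => (j : ℕ) < T.card)
        = Finset.image (Fin.castLE hs) Finset.univ := by
      ext j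
      simp only [mem_filter, mem_univ, true_and, mem_image]
      constructor
      · intro hj
        exact ⟨⟨(j : ℕ), hj⟩, by simp [Fin.ext_iff]⟩
      · rintro ⟨a, rfl⟩
        simpa using a.isLt
    rw [hset, Finset.sum_image (fun a _ b _ h => Fin.castLE_injective hs h)]
  rw [hR, hL]
  refine Finset.sum_le_sum fun j _ => hf _ _ ?_
  have hmono : StrictMono fun j : Fin T.card => (e j : Fin n) :=
    fun a b hab => by exact_mod_cast (Subtype.strictMono_coe _) (e.strictMono hab)
  have := strictMono_le_apply hmono j
  simpa [Fin.le_def] using this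

/-- Let `π 0, …, π (c-1)` be a partition of `V(g) \ S` into independent sets, with each
part `π i` enumerated as `vfun i 0, …, vfun i (|π i| - 1)` in non-decreasing order of
`|N̄_S(·)|`. Then for every `k`-defective clique `C` with `S ⊆ C`, writing
`s i = |C ∩ π i|`, the number of non-edges of `C` satisfies
`|Ē(C)| ≥ |Ē(S)| + ∑ i, (s i * (s i − 1) / 2 + ∑_{j < s i} |N̄_S(vfun i j)|)`. -/
theorem coloring_nonedge_lower_bound (G : SimpleGraph V) [DecidableRel G.Adj]
    (k : ℕ) (S : Finset V) {c : ℕ} (π : Fin c → Finset V)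
    (hdisj : ∀ i j : Fin c, i ≠ j → Disjoint (π i) (π j))
    (hcover : Finset.univ.biUnion π = Finset.univ \ S)
    (hind : ∀ i : Fin c, ∀ x ∈ π i, ∀ y ∈ π i, ¬ G.Adj x y)
    (vfun : (i : Fin c) → Fin ((π i).card) → V)
    (hinj : ∀ i, Function.Injective (vfun i))
    (himg : ∀ i, Finset.image (vfun i) Finset.univ = π i)
    (hmono : ∀ i, ∀ j₁ j₂ : Fin ((π i).card), j₁ ≤ j₂ →
      (nonNbrs G S (vfun i j₁)).card ≤ (nonNbrs G S (vfun i j₂)).card)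
    (C : Finset V) (hSC : S ⊆ C) (hC : (nonEdges G C).card ≤ k) :
    (nonEdges G S).card
      + ∑ i : Fin c, ((C ∩ π i).card * ((C ∩ π i).card - 1) / 2
          + ∑ j ∈ Finset.univ.filter (fun j : Fin ((π i).card) => (j : ℕ) < (C ∩ π i).card),
              (nonNbrs G S (vfun i j)).card)
      ≤ (nonEdges G C).card := by
  classical
  have hπS : ∀ i : Fin c, ∀ x ∈ π i, x ∉ S := by
    intro i x hx
    have hm : x ∈ Finset.univ.biUnion π := Finset.mem_biUnion.2 ⟨i, mem_univ _, hx⟩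
    rw [hcover] at hm
    exact (Finset.mem_sdiff.1 hm).2
  set B : Fin c → Finset (Sym2 V) := fun i => nonEdges G (C ∩ π i) with hB
  set D : Fin c → Finset (Sym2 V) := fun i =>
    (((C ∩ π i) ×ˢ S).filter fun p => ¬ G.Adj p.1 p.2).image fun p => s(p.1, p.2) with hD
  have hmemD : ∀ (i : Fin c) (x y : V), s(x, y) ∈ D i ↔
      (((x ∈ C ∩ π i ∧ y ∈ S) ∨ (y ∈ C ∩ π i ∧ x ∈ S)) ∧ ¬ G.Adj x y) := by
    intro i x y
    constructor
    · intro h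
      simp only [hD, mem_image, mem_filter, mem_product] at h
      obtain ⟨⟨a, b⟩, ⟨⟨ha, hb⟩, hadj⟩, heq⟩ := h
      rw [Sym2.eq_iff] at heq
      rcases heq with ⟨rfl, rfl⟩ | ⟨rfl, rfl⟩
      · exact ⟨Or.inl ⟨ha, hb⟩, hadj⟩
      · exact ⟨Or.inr ⟨ha, hb⟩, fun h => hadj h.symm⟩
    · rintro ⟨(⟨hx, hy⟩ | ⟨hy, hx⟩), hadj⟩
      · simp only [hD, mem_image, mem_filter, mem_product]
        exact ⟨(x, y), ⟨⟨hx, hy⟩, hadj⟩, rfl⟩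
      · simp only [hD, mem_image, mem_filter, mem_product]
        exact ⟨(y, x), ⟨⟨hy, hx⟩, fun h => hadj h.symm⟩, Sym2.eq_swap⟩
  have hBcard : ∀ i, (B i).card = (C ∩ π i).card * ((C ∩ π i).card - 1) / 2 := fun i =>
    nonEdges_card_of_indep G _ fun x hx y hy =>
      hind i x (mem_inter.1 hx).2 y (mem_inter.1 hy).2
  have hdisjCS : ∀ i, Disjoint (C ∩ π i) S := fun i =>
    Finset.disjoint_left.2 fun x hx => hπS i x (mem_inter.1 hx).2
  have hDcard : ∀ i, (D i).card = ∑ a ∈ C ∩ π i, (nonNbrs G S a).card := by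
    intro i
    rw [hD, between_card G _ _ (hdisjCS i)]
    refine Finset.sum_congr rfl fun a ha => ?_
    rw [nonNbrs, Finset.erase_eq_of_notMem (hπS i a (mem_inter.1 ha).2)]
  have hsum : ∀ i, (∑ j ∈ Finset.univ.filter
        (fun j : Fin ((π i).card) => (j : ℕ) < (C ∩ π i).card),
        (nonNbrs G S (vfun i j)).card) ≤ (D i).card := by
    intro i
    rw [hDcard i]
    set T : Finset (Fin ((π i).card)) := Finset.univ.filter (fun j => vfun i j ∈ C) with hT
    have hset : C ∩ π i = T.image (vfun i) := by
      ext x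
      simp only [hT, mem_inter, mem_image, mem_filter, mem_univ, true_and]
      constructor
      · rintro ⟨hxC, hxπ⟩
        have hx : x ∈ Finset.image (vfun i) Finset.univ := by rw [himg i]; exact hxπ
        obtain ⟨j, _, rfl⟩ := mem_image.1 hx
        exact ⟨j, hxC, rfl⟩
      · rintro ⟨j, hj, rfl⟩
        refine ⟨hj, ?_⟩
        rw [← himg i]
        exact mem_image_of_mem _ (mem_univ _)
    have hTcard : T.card = (C ∩ π i).card := by
      rw [hset, Finset.card_image_of_injective _ (hinj i)]
    rw [hset, Finset.sum_image (fun a _ b _ h => hinj i h),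
      Finset.card_image_of_injective _ (hinj i)]
    exact sum_smallest_le _ (hmono i) T
  -- subsets of nonEdges G C
  have hAsub : nonEdges G S ⊆ nonEdges G C := by
    intro e
    induction e using Sym2.ind with
    | _ x y =>
      intro he
      rw [mem_nonEdges] at he ⊢
      exact ⟨hSC he.1, hSC he.2.1, he.2.2⟩
  have hBsub : ∀ i, B i ⊆ nonEdges G C := by
    intro i e
    induction e using Sym2.ind with
    | _ x y =>
      intro he
      rw [hB] at he
      rw [mem_nonEdges] at he ⊢
      exact ⟨(mem_inter.1 he.1).1, (mem_inter.1 he.2.1).1, he.2.2⟩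
  have hDsub : ∀ i, D i ⊆ nonEdges G C := by
    intro i e
    induction e using Sym2.ind with
    | _ x y =>
      intro he
      rw [hmemD] at he
      rw [mem_nonEdges]
      rcases he with ⟨⟨hx, hy⟩ | ⟨hy, hx⟩, hadj⟩
      · refine ⟨(mem_inter.1 hx).1, hSC hy, ?_, hadj⟩
        intro h; subst h; exact hπS i x (mem_inter.1 hx).2 hy
      · refine ⟨hSC hx, (mem_inter.1 hy).1, ?_, hadj⟩
        intro h; subst h; exact hπS i x (mem_inter.1 hy).2 hx
  -- disjointness
  have hdisjBD : ∀ i, Disjoint (B i) (D i) := by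
    intro i
    rw [Finset.disjoint_left]
    intro e
    induction e using Sym2.ind with
    | _ x y =>
      intro hb hd
      rw [hB, mem_nonEdges] at hb
      rw [hmemD] at hd
      rcases hd with ⟨⟨hx, hy⟩ | ⟨hy, hx⟩, _⟩
      · exact hπS i y (mem_inter.1 hb.2.1).2 hy
      · exact hπS i x (mem_inter.1 hb.1).2 hx
  have hdisjA : Disjoint (nonEdges G S) (Finset.univ.biUnion fun i => B i ∪ D i) := by
    rw [Finset.disjoint_left]
    intro e
    induction e using Sym2.ind with
    | _ x y =>
      intro ha hb
      rw [mem_nonEdges] at ha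
      obtain ⟨i, _, hi⟩ := Finset.mem_biUnion.1 hb
      rcases Finset.mem_union.1 hi with h | h
      · rw [hB, mem_nonEdges] at h
        exact hπS i x (mem_inter.1 h.1).2 ha.1
      · rw [hmemD] at h
        rcases h with ⟨⟨hx, _⟩ | ⟨hy, _⟩, _⟩
        · exact hπS i x (mem_inter.1 hx).2 ha.1
        · exact hπS i y (mem_inter.1 hy).2 ha.2.1
  have hpair : ∀ i j : Fin c, i ≠ j → Disjoint (B i ∪ D i) (B j ∪ D j) := by
    intro i j hij
    have hππ : ∀ x : V, x ∈ π i → x ∈ π j → False := fun x hxi hxj =>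
      Finset.disjoint_left.1 (hdisj i j hij) hxi hxj
    rw [Finset.disjoint_left]
    intro e
    induction e using Sym2.ind with
    | _ x y =>
      intro h1 h2
      rcases Finset.mem_union.1 h1 with ha | ha <;> rcases Finset.mem_union.1 h2 with hb | hb
      · rw [hB, mem_nonEdges] at ha hb
        exact hππ x (mem_inter.1 ha.1).2 (mem_inter.1 hb.1).2
      · rw [hB, mem_nonEdges] at ha
        rw [hmemD] at hb
        rcases hb with ⟨⟨hx, _⟩ | ⟨hy, _⟩, _⟩
        · exact hππ x (mem_inter.1 ha.1).2 (mem_inter.1 hx).2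
        · exact hππ y (mem_inter.1 ha.2.1).2 (mem_inter.1 hy).2
      · rw [hB, mem_nonEdges] at hb
        rw [hmemD] at ha
        rcases ha with ⟨⟨hx, _⟩ | ⟨hy, _⟩, _⟩
        · exact hππ x (mem_inter.1 hx).2 (mem_inter.1 hb.1).2
        · exact hππ y (mem_inter.1 hy).2 (mem_inter.1 hb.2.1).2
      · rw [hmemD] at ha hb
        rcases ha with ⟨⟨hx, hy⟩ | ⟨hy, hx⟩, _⟩ <;>
          rcases hb with ⟨⟨hx', hy'⟩ | ⟨hy', hx'⟩, _⟩
        · exact hππ x (mem_inter.1 hx).2 (mem_inter.1 hx').2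
        · exact hπS i x (mem_inter.1 hx).2 hx'
        · exact hπS i y (mem_inter.1 hy).2 hy'
        · exact hππ y (mem_inter.1 hy).2 (mem_inter.1 hy').2
  -- assembly
  have hsub : nonEdges G S ∪ Finset.univ.biUnion (fun i => B i ∪ D i) ⊆ nonEdges G C :=
    Finset.union_subset hAsub (Finset.biUnion_subset.2 fun i _ =>
      Finset.union_subset (hBsub i) (hDsub i))
  calc (nonEdges G S).card
      + ∑ i : Fin c, ((C ∩ π i).card * ((C ∩ π i).card - 1) / 2
          + ∑ j ∈ Finset.univ.filter (fun j : Fin ((π i).card) => (j : ℕ) < (C ∩ π i).card),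
              (nonNbrs G S (vfun i j)).card)
      ≤ (nonEdges G S).card + ∑ i : Fin c, ((B i).card + (D i).card) := by
        refine Nat.add_le_add_left (Finset.sum_le_sum fun i _ => ?_) _
        rw [hBcard i]
        exact Nat.add_le_add_left (hsum i) _
    _ = (nonEdges G S ∪ Finset.univ.biUnion (fun i => B i ∪ D i)).card := by
        rw [Finset.card_union_of_disjoint hdisjA,
          Finset.card_biUnion fun i _ j _ hij => hpair i j hij]
        congr 1
        exact Finset.sum_congr rfl fun i _ =>
          (Finset.card_union_of_disjoint (hdisjBD i)).symm
    _ ≤ (nonEdges G C).card := Finset.card_le_card hsub
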